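/- For all odd natural numbers w and h (with w, h ≥ 1), the w × h rectangular grid graph, i.e., the Cartesian (box) product P_w □ P_h of the path graphs on w and on h vertices, is reconfigurable. -/

import Mathlib

/-- A vertex `v` is covered by the matching `M` if some edge of `M` contains it. -/
def Covers {V : Type*} (M : Set (Sym2 V)) (v : V) : Prop := ∃ e ∈ M, v ∈ e

/-- `M` is a matching of `G`: a set of edges of `G`, no two of which share a vertex. -/
def IsMatchingOn {V : Type*} (G : SimpleGraph V) (M : Set (Sym2 V)) : Prop :=
  M ⊆ G.edgeSet ∧ ∀ e ∈ M, ∀ f ∈ M, e ≠ f → ∀ v : V, v ∈ e → v ∉ f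

/-- `M` is an odd matching of `G`: a matching such that exactly one vertex is uncovered. -/
def IsOddMatching {V : Type*} (G : SimpleGraph V) (M : Set (Sym2 V)) : Prop :=
  IsMatchingOn G M ∧ ∃! v : V, ¬ Covers M v

/-- A flip transforms the odd matching `M` with isolated vertex `u` into
`M' = (M \ {vw}) ∪ {uv}`, where `uv` is an edge of `G` and `vw` is an edge of `M`. -/
def Flip {V : Type*} (G : SimpleGraph V) (M M' : Set (Sym2 V)) : Prop :=
  IsOddMatching G M ∧
  ∃ u v w : V, ¬ Covers M u ∧ s(u, v) ∈ G.edgeSet ∧ s(v, w) ∈ M ∧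
    M' = (M \ {s(v, w)}) ∪ {s(u, v)}

/-- `M` can be reconfigured to `M'` by some finite sequence of flips. -/
def Reconfig {V : Type*} (G : SimpleGraph V) (M M' : Set (Sym2 V)) : Prop :=
  Relation.ReflTransGen (Flip G) M M'

/-- `G` is reconfigurable: every odd matching can be reconfigured to every other one. -/
def Reconfigurable {V : Type*} (G : SimpleGraph V) : Prop :=
  ∀ M M' : Set (Sym2 V), IsOddMatching G M → IsOddMatching G M' → Reconfig G M M'

/-- `M` can be transformed into `M'` by a flip sequence of length exactly `k`. -/
def FlipSeq {V : Type*} (G : SimpleGraph V) (M M' : Set (Sym2 V)) (k : ℕ) : Prop :=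
  ∃ f : ℕ → Set (Sym2 V), f 0 = M ∧ f k = M' ∧ ∀ i < k, Flip G (f i) (f (i + 1))

/-- The graph obtained from `G` by deleting the vertex set `s` has a perfect matching:
a matching of `G` avoiding the vertices of `s` and covering all other vertices. -/
def HasPerfectMatchingAvoiding {V : Type*} (G : SimpleGraph V) (s : Set V) : Prop :=
  ∃ M : Set (Sym2 V), IsMatchingOn G M ∧ (∀ e ∈ M, ∀ v : V, v ∈ e → v ∉ s) ∧
    ∀ v : V, v ∉ s → Covers M v

section Generic
variable {V : Type*} {G : SimpleGraph V}

lemma hole_eq {M : Set (Sym2 V)} (hM : IsOddMatching G M) {x y : V}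
    (hx : ¬ Covers M x) (hy : ¬ Covers M y) : x = y := by
  obtain ⟨-, z, hz, hu⟩ := hM
  rw [hu x hx, hu y hy]

lemma covered_of_ne {M : Set (Sym2 V)} (hM : IsOddMatching G M) {x v : V}
    (hx : ¬ Covers M x) (hv : v ≠ x) : Covers M v := by
  by_contra h
  exact hv (hole_eq hM h hx)

lemma edge_unique {M : Set (Sym2 V)} (hM : IsMatchingOn G M) {e f : Sym2 V} {v : V}
    (he : e ∈ M) (hf : f ∈ M) (hv : v ∈ e) (hv' : v ∈ f) : e = f := by
  by_contra hne
  exact hM.2 e he f hf hne v hv hv'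

lemma not_covers_hole {M : Set (Sym2 V)} {x : V} (hx : ¬ Covers M x) {e : Sym2 V}
    (he : e ∈ M) : x ∉ e := fun h => hx ⟨e, he, h⟩

/-- Main flip lemma: results of a flip. -/
lemma flip_result {M : Set (Sym2 V)} (hM : IsOddMatching G M) {u v w : V}
    (hu : ¬ Covers M u) (huv : s(u, v) ∈ G.edgeSet) (hvw : s(v, w) ∈ M) :
    Flip G M ((M \ {s(v, w)}) ∪ {s(u, v)}) ∧
    IsOddMatching G ((M \ {s(v, w)}) ∪ {s(u, v)}) ∧
    ¬ Covers ((M \ {s(v, w)}) ∪ {s(u, v)}) w := by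
  set M' := (M \ {s(v, w)}) ∪ {s(u, v)} with hM'
  have huv' : u ≠ v := (G.mem_edgeSet.mp huv).ne
  have hvw' : v ≠ w := (G.mem_edgeSet.mp (hM.1.1 hvw)).ne
  have huw : u ≠ w := fun h => hu ⟨s(v, w), hvw, by rw [h]; simp⟩
  have huvM : s(u, v) ∉ M := fun h => hu ⟨s(u, v), h, by simp⟩
  have hne : s(u, v) ≠ s(v, w) := by
    intro h; rw [Sym2.eq_iff] at h; tauto
  have memM' : ∀ e : Sym2 V, e ∈ M' ↔ (e ∈ M ∧ e ≠ s(v, w)) ∨ e = s(u, v) := by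
    intro e; simp only [hM', Set.mem_union, Set.mem_diff, Set.mem_singleton_iff]
  -- M' is a matching
  have hmatch : IsMatchingOn G M' := by
    constructor
    · intro e he
      rcases (memM' e).mp he with ⟨h1, -⟩ | h2
      · exact hM.1.1 h1
      · rw [h2]; exact huv
    · intro e he f hf hef z hze
      rcases (memM' e).mp he with ⟨he1, he2⟩ | he3 <;>
        rcases (memM' f).mp hf with ⟨hf1, hf2⟩ | hf3
      · exact hM.1.2 e he1 f hf1 hef z hze
      · rw [hf3, Sym2.mem_iff]
        push_neg
        constructor
        · intro h; exact hu ⟨e, he1, h ▸ hze⟩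
        · intro h
          apply he2
          exact edge_unique hM.1 he1 hvw (h ▸ hze) (by simp)
      · intro hzf
        rw [he3, Sym2.mem_iff] at hze
        rcases hze with rfl | rfl
        · exact hu ⟨f, hf1, hzf⟩
        · exact hf2 (edge_unique hM.1 hf1 hvw hzf (by simp))
      · exact absurd (he3.trans hf3.symm) hef
  -- w is not covered by M'
  have hwM' : ¬ Covers M' w := by
    rintro ⟨e, he, hwe⟩
    rcases (memM' e).mp he with ⟨he1, he2⟩ | he3
    · exact he2 (edge_unique hM.1 he1 hvw hwe (by simp))
    · rw [he3, Sym2.mem_iff] at hwe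
      rcases hwe with rfl | rfl
      · exact huw rfl
      · exact hvw' rfl
  refine ⟨⟨hM, u, v, w, hu, huv, hvw, rfl⟩, ⟨hmatch, w, hwM', ?_⟩, hwM'⟩
  intro z hz
  by_contra hzw
  -- z ≠ w is covered by M'
  apply hz
  by_cases hzu : z = u
  · exact ⟨s(u, v), (memM' _).mpr (Or.inr rfl), by rw [hzu]; simp⟩
  by_cases hzv : z = v
  · exact ⟨s(u, v), (memM' _).mpr (Or.inr rfl), by rw [hzv]; simp⟩
  obtain ⟨e, he, hze⟩ := covered_of_ne hM hu hzu
  refine ⟨e, (memM' e).mpr (Or.inl ⟨he, ?_⟩), hze⟩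
  intro h
  rw [h, Sym2.mem_iff] at hze
  tauto

lemma flip_symm {M M' : Set (Sym2 V)} (h : Flip G M M') : Flip G M' M := by
  obtain ⟨hM, u, v, w, hu, huv, hvw, rfl⟩ := h
  obtain ⟨-, hM', hw⟩ := flip_result hM hu huv hvw
  refine ⟨hM', w, v, u, hw, ?_, ?_, ?_⟩
  · rw [Sym2.eq_swap]; exact hM.1.1 hvw
  · exact Set.mem_union_right _ (Set.mem_singleton_iff.mpr Sym2.eq_swap)
  · have huvM : s(u, v) ∉ M := fun h => hu ⟨s(u, v), h, by simp⟩
    have h1 : s(v, u) = s(u, v) := Sym2.eq_swap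
    have h2 : s(w, v) = s(v, w) := Sym2.eq_swap
    rw [h1, h2]
    ext e
    simp only [Set.mem_union, Set.mem_diff, Set.mem_singleton_iff]
    constructor
    · intro he
      by_cases h : e = s(v, w)
      · exact Or.inr h
      · exact Or.inl ⟨Or.inl ⟨he, h⟩, fun hh => huvM (hh ▸ he)⟩
    · rintro (⟨⟨he1, he2⟩ | he1, he3⟩ | he)
      · exact he1
      · exact absurd he1 he3
      · rw [he]; exact hvw

lemma reconfig_symm {M M' : Set (Sym2 V)} (h : Reconfig G M M') : Reconfig G M' M :=
  (@Relation.ReflTransGen.stdSymm _ _ ⟨fun _ _ => flip_symm⟩).symm _ _ h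

end Generic

section SetHelpers
variable {α : Type*} {A B : Set α} {a b : α}

lemma symmDiff_flip_left (haA : a ∉ A) (haB : a ∈ B) (hbA : b ∈ A) (hbB : b ∉ B)
    (hab : a ≠ b) :
    symmDiff ((A \ {b}) ∪ {a}) B = ((symmDiff A B) \ {b}) \ {a} := by
  ext e
  by_cases h1 : e = b
  · subst h1
    simp only [Set.mem_symmDiff, Set.mem_union, Set.mem_diff, Set.mem_singleton_iff]
    tauto
  · by_cases h2 : e = a
    · subst h2
      simp only [Set.mem_symmDiff, Set.mem_union, Set.mem_diff, Set.mem_singleton_iff]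
      tauto
    · simp only [Set.mem_symmDiff, Set.mem_union, Set.mem_diff, Set.mem_singleton_iff]
      tauto

lemma symmDiff_flip_both (haA : a ∉ A) (haB : a ∉ B) (hbA : b ∈ A) (hbB : b ∈ B)
    (hab : a ≠ b) :
    symmDiff ((A \ {b}) ∪ {a}) ((B \ {b}) ∪ {a}) = symmDiff A B := by
  ext e
  by_cases h1 : e = b
  · subst h1
    simp only [Set.mem_symmDiff, Set.mem_union, Set.mem_diff, Set.mem_singleton_iff]
    tauto
  · by_cases h2 : e = a
    · subst h2
      simp only [Set.mem_symmDiff, Set.mem_union, Set.mem_diff, Set.mem_singleton_iff]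
      tauto
    · simp only [Set.mem_symmDiff, Set.mem_union, Set.mem_diff, Set.mem_singleton_iff]
      tauto

lemma symmDiff_flip_insert (haA : a ∉ A) (haB : a ∉ B) (hbA : b ∈ A) (hbB : b ∉ B)
    (hab : a ≠ b) :
    symmDiff ((A \ {b}) ∪ {a}) B = ((symmDiff A B) \ {b}) ∪ {a} := by
  ext e
  by_cases h1 : e = b
  · subst h1
    simp only [Set.mem_symmDiff, Set.mem_union, Set.mem_diff, Set.mem_singleton_iff]
    tauto
  · by_cases h2 : e = a
    · subst h2
      simp only [Set.mem_symmDiff, Set.mem_union, Set.mem_diff, Set.mem_singleton_iff]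
      tauto
    · simp only [Set.mem_symmDiff, Set.mem_union, Set.mem_diff, Set.mem_singleton_iff]
      tauto

end SetHelpers

section Generic2
variable {V : Type*} [Finite V] {G : SimpleGraph V}

lemma case1 {M N : Set (Sym2 V)} (hM : IsOddMatching G M) (hN : IsOddMatching G N)
    {x y : V} (hx : ¬ Covers M x) (hy : ¬ Covers N y) (hxy : x ≠ y) :
    ∃ M₁ : Set (Sym2 V), Flip G M M₁ ∧ IsOddMatching G M₁ ∧
      (symmDiff M₁ N).ncard + 2 = (symmDiff M N).ncard := by
  obtain ⟨e, heN, hxe⟩ := covered_of_ne hN hy hxy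
  obtain ⟨v, rfl⟩ := Sym2.mem_iff_exists.mp hxe
  have hxv_edge : s(x, v) ∈ G.edgeSet := hN.1.1 heN
  have hxv : x ≠ v := (G.mem_edgeSet.mp hxv_edge).ne
  obtain ⟨f, hfM, hvf⟩ := covered_of_ne hM hx hxv.symm
  obtain ⟨w, rfl⟩ := Sym2.mem_iff_exists.mp hvf
  have hwx : w ≠ x := fun h => hx ⟨s(v, w), hfM, by rw [← h]; simp⟩
  have hxvM : s(x, v) ∉ M := fun h => hx ⟨s(x, v), h, by simp⟩
  have hvwN : s(v, w) ∉ N := by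
    intro hvwN
    have := edge_unique hN.1 hvwN heN (Sym2.mem_mk_left v w) (Sym2.mem_mk_right x v)
    rw [Sym2.eq_iff] at this
    rcases this with ⟨h1, -⟩ | ⟨-, h2⟩
    · exact hxv h1.symm
    · exact hwx h2
  have hne : s(x, v) ≠ s(v, w) := by
    intro h; rw [Sym2.eq_iff] at h
    rcases h with ⟨h1, -⟩ | ⟨h1, -⟩
    · exact hxv h1
    · exact hwx h1.symm
  obtain ⟨hflip, hodd, -⟩ := flip_result hM hx hxv_edge hfM
  refine ⟨_, hflip, hodd, ?_⟩
  have hset : symmDiff ((M \ {s(v, w)}) ∪ {s(x, v)}) N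
      = ((symmDiff M N) \ {s(v, w)}) \ {s(x, v)} :=
    symmDiff_flip_left hxvM heN hfM hvwN hne
  rw [hset]
  have m1 : s(v, w) ∈ symmDiff M N := Set.mem_symmDiff.mpr (Or.inl ⟨hfM, hvwN⟩)
  have m2 : s(x, v) ∈ (symmDiff M N) \ {s(v, w)} :=
    ⟨Set.mem_symmDiff.mpr (Or.inr ⟨heN, hxvM⟩), hne⟩
  have e1 := Set.ncard_diff_singleton_add_one m2 (Set.toFinite _)
  have e2 := Set.ncard_diff_singleton_add_one m1 (Set.toFinite _)
  omega

lemma lemB (k : ℕ) : ∀ M N K : Set (Sym2 V), ∀ x u : V,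
    IsOddMatching G M → IsOddMatching G N → IsOddMatching G K →
    ¬ Covers M x → ¬ Covers N x → ¬ Covers K u → Covers (symmDiff M N) u →
    (symmDiff M K).ncard = k →
    ∃ M' N' : Set (Sym2 V), ∃ x' y' : V, Reconfig G M M' ∧ Reconfig G N N' ∧
      IsOddMatching G M' ∧ IsOddMatching G N' ∧
      (symmDiff M' N').ncard = (symmDiff M N).ncard ∧
      ¬ Covers M' x' ∧ ¬ Covers N' y' ∧ x' ≠ y' := by
  induction k using Nat.strong_induction_on with
  | _ k IH =>
  intro M N K x u hM hN hK hx hxN hKu hDu hk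
  have hux : u ≠ x := by
    obtain ⟨e, heD, hue⟩ := hDu
    rcases Set.mem_symmDiff.mp heD with ⟨heM, -⟩ | ⟨heN, -⟩
    · exact fun h => hx ⟨e, heM, h ▸ hue⟩
    · exact fun h => hxN ⟨e, heN, h ▸ hue⟩
  obtain ⟨e, heK, hxe⟩ := covered_of_ne hK hKu (Ne.symm hux)
  obtain ⟨v, rfl⟩ := Sym2.mem_iff_exists.mp hxe
  have hxv_edge : s(x, v) ∈ G.edgeSet := hK.1.1 heK
  have hxv : x ≠ v := (G.mem_edgeSet.mp hxv_edge).ne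
  obtain ⟨f, hfM, hvf⟩ := covered_of_ne hM hx hxv.symm
  obtain ⟨w, rfl⟩ := Sym2.mem_iff_exists.mp hvf
  have hwx : w ≠ x := fun h => hx ⟨s(v, w), hfM, by rw [← h]; simp⟩
  have hxvM : s(x, v) ∉ M := fun h => hx ⟨s(x, v), h, by simp⟩
  have hxvN : s(x, v) ∉ N := fun h => hxN ⟨s(x, v), h, by simp⟩
  have hvwK : s(v, w) ∉ K := by
    intro hvwK
    have := edge_unique hK.1 hvwK heK (Sym2.mem_mk_left v w) (Sym2.mem_mk_right x v)
    rw [Sym2.eq_iff] at this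
    rcases this with ⟨h1, -⟩ | ⟨-, h2⟩
    · exact hxv h1.symm
    · exact hwx h2
  have hne : s(x, v) ≠ s(v, w) := by
    intro h; rw [Sym2.eq_iff] at h
    rcases h with ⟨h1, -⟩ | ⟨h1, -⟩
    · exact hxv h1
    · exact hwx h1.symm
  by_cases hvwN : s(v, w) ∈ N
  · -- mirror case: flip both M and N
    obtain ⟨hflipM, hoddM1, hwM1⟩ := flip_result hM hx hxv_edge hfM
    obtain ⟨hflipN, hoddN1, hwN1⟩ := flip_result hN hxN hxv_edge hvwN
    set M₁ := (M \ {s(v, w)}) ∪ {s(x, v)} with hM1def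
    set N₁ := (N \ {s(v, w)}) ∪ {s(x, v)} with hN1def
    have hsetMN : symmDiff M₁ N₁ = symmDiff M N :=
      symmDiff_flip_both hxvM hxvN hfM hvwN hne
    have hsetMK : symmDiff M₁ K = ((symmDiff M K) \ {s(v, w)}) \ {s(x, v)} :=
      symmDiff_flip_left hxvM heK hfM hvwK hne
    have m1 : s(v, w) ∈ symmDiff M K := Set.mem_symmDiff.mpr (Or.inl ⟨hfM, hvwK⟩)
    have m2 : s(x, v) ∈ (symmDiff M K) \ {s(v, w)} :=
      ⟨Set.mem_symmDiff.mpr (Or.inr ⟨heK, hxvM⟩), hne⟩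
    have e1 := Set.ncard_diff_singleton_add_one m2 (Set.toFinite _)
    have e2 := Set.ncard_diff_singleton_add_one m1 (Set.toFinite _)
    have hklt : (symmDiff M₁ K).ncard < k := by rw [hsetMK]; omega
    have hDu1 : Covers (symmDiff M₁ N₁) u := by rw [hsetMN]; exact hDu
    obtain ⟨M', N', x', y', rM, rN, oM, oN, hcard, hx', hy', hxy'⟩ :=
      IH _ hklt M₁ N₁ K w u hoddM1 hoddN1 hK hwM1 hwN1 hKu hDu1 rfl
    exact ⟨M', N', x', y', Relation.ReflTransGen.head hflipM rM,
      Relation.ReflTransGen.head hflipN rN, oM, oN, by rw [hcard, hsetMN], hx', hy', hxy'⟩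
  · -- asymmetric case: flip only M, holes now differ
    obtain ⟨hflipM, hoddM1, hwM1⟩ := flip_result hM hx hxv_edge hfM
    set M₁ := (M \ {s(v, w)}) ∪ {s(x, v)} with hM1def
    have hset : symmDiff M₁ N = ((symmDiff M N) \ {s(v, w)}) ∪ {s(x, v)} :=
      symmDiff_flip_insert hxvM hxvN hfM hvwN hne
    have m1 : s(v, w) ∈ symmDiff M N := Set.mem_symmDiff.mpr (Or.inl ⟨hfM, hvwN⟩)
    have m2 : s(x, v) ∉ (symmDiff M N) \ {s(v, w)} := by
      intro h
      rcases Set.mem_symmDiff.mp h.1 with ⟨h3, -⟩ | ⟨h3, -⟩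
      · exact hxvM h3
      · exact hxvN h3
    have e1 := Set.ncard_diff_singleton_add_one m1 (Set.toFinite _)
    have e2 := Set.ncard_insert_of_notMem m2 (Set.toFinite _)
    have hcard : (symmDiff M₁ N).ncard = (symmDiff M N).ncard := by
      rw [hset, Set.union_singleton, e2]; omega
    exact ⟨M₁, N, w, x, Relation.ReflTransGen.single hflipM, Relation.ReflTransGen.refl,
      hoddM1, hN, hcard, hwM1, hxN, hwx⟩

lemma mainRec (hE : ∀ a b : V, G.Adj a b →
      ∃ u : V, (u = a ∨ u = b) ∧ ∃ K : Set (Sym2 V), IsOddMatching G K ∧ ¬ Covers K u)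
    (n : ℕ) : ∀ M N : Set (Sym2 V), IsOddMatching G M → IsOddMatching G N →
    (symmDiff M N).ncard = n → Reconfig G M N := by
  induction n using Nat.strong_induction_on with
  | _ n IH =>
  intro M N hM hN hn
  rcases Set.eq_empty_or_nonempty (symmDiff M N) with hem | ⟨e, he⟩
  · have hMN : M = N := Set.symmDiff_eq_empty.mp hem
    rw [hMN]
    exact Relation.ReflTransGen.refl
  · obtain ⟨x, hx, -⟩ := hM.2
    obtain ⟨y, hy, -⟩ := hN.2
    by_cases hxy : x = y
    · -- equal holes: use Lemma B
      subst hxy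
      have heE : e ∈ G.edgeSet := by
        rcases Set.mem_symmDiff.mp he with ⟨h1, -⟩ | ⟨h1, -⟩
        · exact hM.1.1 h1
        · exact hN.1.1 h1
      revert he heE
      induction e using Sym2.ind with
      | _ a b =>
      intro he heE
      obtain ⟨u, huab, K, hK, hKu⟩ := hE a b (G.mem_edgeSet.mp heE)
      have hDu : Covers (symmDiff M N) u := by
        refine ⟨s(a, b), he, ?_⟩
        rw [Sym2.mem_iff]
        exact huab
      obtain ⟨M', N', x', y', rM, rN, oM, oN, hcard, hx', hy', hxy'⟩ :=
        lemB (symmDiff M K).ncard M N K x u hM hN hK hx hy hKu hDu rfl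
      obtain ⟨M'', hflip, oM'', hcard2⟩ := case1 oM oN hx' hy' hxy'
      have hlt : (symmDiff M'' N').ncard < n := by
        rw [hcard, hn] at hcard2
        omega
      have hrec := IH _ hlt M'' N' oM'' oN rfl
      exact (rM.trans (Relation.ReflTransGen.head hflip hrec)).trans (reconfig_symm rN)
    · -- distinct holes: single flip reduces ncard
      obtain ⟨M₁, hflip, oM₁, hcard⟩ := case1 hM hN hx hy hxy
      have hlt : (symmDiff M₁ N).ncard < n := by omega
      exact Relation.ReflTransGen.head hflip (IH _ hlt M₁ N oM₁ hN rfl)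

theorem generic_reconfigurable
    (hE : ∀ a b : V, G.Adj a b →
      ∃ u : V, (u = a ∨ u = b) ∧ ∃ K : Set (Sym2 V), IsOddMatching G K ∧ ¬ Covers K u) :
    Reconfigurable G :=
  fun M N hM hN => mainRec hE (symmDiff M N).ncard M N hM hN rfl

end Generic2

open SimpleGraph


section Grid

def gx (w m : ℕ) : ℕ := if (m / w) % 2 = 0 then m % w else w - 1 - m % w

def gvert (w h : ℕ) (hw : 0 < w) (hh : 0 < h) (m : ℕ) : Fin w × Fin h :=
  (⟨gx w m, by have := Nat.mod_lt m hw; unfold gx; split <;> omega⟩,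
   ⟨(m / w) % h, Nat.mod_lt _ hh⟩)

def gpos (w : ℕ) {h : ℕ} (v : Fin w × Fin h) : ℕ :=
  (if (v.2 : ℕ) % 2 = 0 then (v.1 : ℕ) else w - 1 - (v.1 : ℕ)) + (v.2 : ℕ) * w

variable {w h : ℕ} (hw : 0 < w) (hh : 0 < h)

lemma gpos_lt (v : Fin w × Fin h) : gpos w v < w * h := by
  obtain ⟨⟨x, hx⟩, ⟨y, hy⟩⟩ := v
  have h1 : (y + 1) * w ≤ h * w := Nat.mul_le_mul_right w (by omega)
  have h2 : (y + 1) * w = y * w + w := by ring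
  have h3 : w * h = h * w := Nat.mul_comm w h
  unfold gpos
  simp only
  split <;> omega

lemma gpos_gvert {m : ℕ} (hm : m < w * h) : gpos w (gvert w h hw hh m) = m := by
  have hyh : m / w < h := (Nat.div_lt_iff_lt_mul hw).mpr (by rw [Nat.mul_comm h w]; omega)
  have hr : m % w < w := Nat.mod_lt m hw
  have e2 : (m / w) % h = m / w := Nat.mod_eq_of_lt hyh
  have e3 := Nat.mod_add_div' m w
  unfold gvert gpos gx
  simp only [e2]
  by_cases hy : (m / w) % 2 = 0
  · rw [if_pos hy, if_pos hy]; omega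
  · rw [if_neg hy, if_neg hy]; omega

lemma gvert_gpos (v : Fin w × Fin h) : gvert w h hw hh (gpos w v) = v := by
  obtain ⟨⟨x, hx⟩, ⟨y, hy⟩⟩ := v
  have hxpw : (if y % 2 = 0 then x else w - 1 - x) < w := by split <;> omega
  have hdiv : gpos w (⟨⟨x, hx⟩, ⟨y, hy⟩⟩ : Fin w × Fin h) / w = y := by
    unfold gpos
    simp only
    rw [Nat.add_mul_div_right _ _ hw, Nat.div_eq_of_lt hxpw]
    omega
  have hmod : gpos w (⟨⟨x, hx⟩, ⟨y, hy⟩⟩ : Fin w × Fin h) % w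
      = (if y % 2 = 0 then x else w - 1 - x) := by
    unfold gpos
    simp only
    rw [Nat.add_mul_mod_self_right, Nat.mod_eq_of_lt hxpw]
  unfold gvert gx
  refine Prod.ext (Fin.ext ?_) (Fin.ext ?_)
  · simp only [hdiv, hmod]
    by_cases hy2 : y % 2 = 0
    · rw [if_pos hy2, if_pos hy2]
    · rw [if_neg hy2, if_neg hy2]; omega
  · simp only [hdiv, Nat.mod_eq_of_lt hy]

lemma gvert_inj {m m' : ℕ} (hm : m < w * h) (hm' : m' < w * h)
    (e : gvert w h hw hh m = gvert w h hw hh m') : m = m' := by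
  have := congrArg (gpos w) e
  rwa [gpos_gvert hw hh hm, gpos_gvert hw hh hm'] at this

lemma gvert_adj {q : ℕ} (hq : q + 1 < w * h) :
    ((pathGraph w).boxProd (pathGraph h)).Adj (gvert w h hw hh q) (gvert w h hw hh (q + 1)) := by
  have hr : q % w < w := Nat.mod_lt q hw
  have hqe := Nat.mod_add_div' q w
  have hyh : q / w < h := (Nat.div_lt_iff_lt_mul hw).mpr (by rw [Nat.mul_comm h w]; omega)
  by_cases hrw : q % w + 1 < w
  · have hdiv : (q + 1) / w = q / w := by
      rw [show q + 1 = (q % w + 1) + (q / w) * w by omega,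
        Nat.add_mul_div_right _ _ hw, Nat.div_eq_of_lt hrw]
      omega
    have hmod : (q + 1) % w = q % w + 1 := by
      rw [show q + 1 = (q % w + 1) + (q / w) * w by omega,
        Nat.add_mul_mod_self_right, Nat.mod_eq_of_lt hrw]
    rw [SimpleGraph.boxProd_adj]
    left
    refine ⟨?_, ?_⟩
    · rw [SimpleGraph.pathGraph_adj]
      simp only [gvert, gx, hdiv, hmod]
      by_cases hy2 : (q / w) % 2 = 0
      · rw [if_pos hy2, if_pos hy2]
        exact Or.inl rfl
      · rw [if_neg hy2, if_neg hy2]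
        omega
    · simp only [gvert, hdiv]
  · have hrw' : q % w + 1 = w := by omega
    have hq1 : q + 1 = 0 + (q / w + 1) * w := by
      have : (q / w + 1) * w = q / w * w + w := by ring
      omega
    have hdiv : (q + 1) / w = q / w + 1 := by
      rw [hq1, Nat.add_mul_div_right _ _ hw, Nat.zero_div]
      omega
    have hmod : (q + 1) % w = 0 := by
      rw [hq1, Nat.add_mul_mod_self_right, Nat.zero_mod]
    have hy1h : q / w + 1 < h := by
      have hcm : w * h = h * w := Nat.mul_comm _ _
      have h5 : (q / w + 1) * w < h * w := by
        have : (q / w + 1) * w = q / w * w + w := by ring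
        omega
      exact Nat.lt_of_mul_lt_mul_right h5
    rw [SimpleGraph.boxProd_adj]
    right
    refine ⟨?_, ?_⟩
    · rw [SimpleGraph.pathGraph_adj]
      left
      simp only [gvert, hdiv]
      rw [Nat.mod_eq_of_lt hyh, Nat.mod_eq_of_lt hy1h]
    · apply Fin.ext
      simp only [gvert, gx, hdiv, hmod]
      by_cases hy2 : (q / w) % 2 = 0
      · rw [if_pos hy2, if_neg (by omega : ¬(q / w + 1) % 2 = 0)]
        omega
      · rw [if_neg hy2, if_pos (by omega : (q / w + 1) % 2 = 0)]
        omega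

lemma gpos_parity (hw2 : w % 2 = 1) {a b : Fin w × Fin h}
    (hadj : ((pathGraph w).boxProd (pathGraph h)).Adj a b) :
    (gpos w a + gpos w b) % 2 = 1 := by
  obtain ⟨⟨x1, hx1⟩, ⟨y1, hy1⟩⟩ := a
  obtain ⟨⟨x2, hx2⟩, ⟨y2, hy2⟩⟩ := b
  rw [SimpleGraph.boxProd_adj] at hadj
  unfold gpos
  simp only
  rcases hadj with ⟨hpath, heq⟩ | ⟨hpath, heq⟩
  · -- same row
    simp only [Prod.mk.injEq] at heq
    have hyy : y1 = y2 := by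
      have := congrArg Fin.val heq
      simpa using this
    subst hyy
    rw [SimpleGraph.pathGraph_adj] at hpath
    simp only [Fin.val_mk] at hpath
    by_cases hp : y1 % 2 = 0
    · rw [if_pos hp, if_pos hp]; omega
    · rw [if_neg hp, if_neg hp]; omega
  · -- same column
    simp only [Prod.mk.injEq] at heq
    have hxx : x1 = x2 := by
      have := congrArg Fin.val heq
      simpa using this
    subst hxx
    rw [SimpleGraph.pathGraph_adj] at hpath
    simp only [Fin.val_mk] at hpath
    have hm1 : (y1 + 1) * w = y1 * w + w := by ring
    have hm2 : (y2 + 1) * w = y2 * w + w := by ring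
    rcases hpath with h1 | h1
    · have hss : y2 = y1 + 1 := h1.symm
      subst hss
      by_cases hp : y1 % 2 = 0
      · rw [if_pos hp, if_neg (by omega : ¬(y1 + 1) % 2 = 0)]
        omega
      · rw [if_neg hp, if_pos (by omega : (y1 + 1) % 2 = 0)]
        omega
    · have hss : y1 = y2 + 1 := h1.symm
      subst hss
      by_cases hp : y2 % 2 = 0
      · rw [if_neg (by omega : ¬(y2 + 1) % 2 = 0), if_pos hp]
        omega
      · rw [if_pos (by omega : (y2 + 1) % 2 = 0), if_neg hp]
        omega

def Kmatch (w h : ℕ) (hw : 0 < w) (hh : 0 < h) (p : ℕ) : Set (Sym2 (Fin w × Fin h)) :=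
  { e | ∃ q : ℕ, q + 1 < w * h ∧ ((q % 2 = 0 ∧ q < p) ∨ (q % 2 = 1 ∧ p < q)) ∧
        e = s(gvert w h hw hh q, gvert w h hw hh (q + 1)) }

lemma Kmatch_odd (hwh : (w * h) % 2 = 1) {p : ℕ} (hp2 : p % 2 = 0) (hp : p < w * h) :
    IsOddMatching ((pathGraph w).boxProd (pathGraph h)) (Kmatch w h hw hh p) ∧
    ¬ Covers (Kmatch w h hw hh p) (gvert w h hw hh p) := by
  have hunc : ¬ Covers (Kmatch w h hw hh p) (gvert w h hw hh p) := by
    rintro ⟨e, ⟨q, hq1, hq2, rfl⟩, hpe⟩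
    rw [Sym2.mem_iff] at hpe
    rcases hpe with he | he
    · have := gvert_inj hw hh hp (by omega) he; omega
    · have := gvert_inj hw hh hp hq1 he; omega
  have hcov : ∀ v : Fin w × Fin h, v ≠ gvert w h hw hh p →
      Covers (Kmatch w h hw hh p) v := by
    intro v hv
    have hvlt : gpos w v < w * h := gpos_lt v
    have hveq : gvert w h hw hh (gpos w v) = v := gvert_gpos hw hh v
    have hmp : gpos w v ≠ p := fun hh2 => hv (by rw [← hveq, hh2])
    set m := gpos w v with hm
    by_cases h1 : m < p
    · by_cases h2 : m % 2 = 0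
      · exact ⟨s(gvert w h hw hh m, gvert w h hw hh (m + 1)),
          ⟨m, by omega, Or.inl ⟨h2, h1⟩, rfl⟩,
          by rw [← hveq]; exact Sym2.mem_mk_left _ _⟩
      · refine ⟨s(gvert w h hw hh (m - 1), gvert w h hw hh (m - 1 + 1)),
          ⟨m - 1, by omega, Or.inl ⟨by omega, by omega⟩, rfl⟩, ?_⟩
        have he : m - 1 + 1 = m := by omega
        rw [he, ← hveq]
        exact Sym2.mem_mk_right _ _
    · by_cases h2 : m % 2 = 1
      · exact ⟨s(gvert w h hw hh m, gvert w h hw hh (m + 1)),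
          ⟨m, by omega, Or.inr ⟨h2, by omega⟩, rfl⟩,
          by rw [← hveq]; exact Sym2.mem_mk_left _ _⟩
      · refine ⟨s(gvert w h hw hh (m - 1), gvert w h hw hh (m - 1 + 1)),
          ⟨m - 1, by omega, Or.inr ⟨by omega, by omega⟩, rfl⟩, ?_⟩
        have he : m - 1 + 1 = m := by omega
        rw [he, ← hveq]
        exact Sym2.mem_mk_right _ _
  refine ⟨⟨⟨?_, ?_⟩, gvert w h hw hh p, hunc, ?_⟩, hunc⟩
  · rintro e ⟨q, hq1, hq2, rfl⟩
    exact (((pathGraph w).boxProd (pathGraph h)).mem_edgeSet).mpr (gvert_adj hw hh hq1)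
  · rintro e ⟨q, hq1, hq2, rfl⟩ f ⟨q', hq1', hq2', rfl⟩ hef z hz1 hz2
    rw [Sym2.mem_iff] at hz1 hz2
    rcases hz1 with h1 | h1 <;> rcases hz2 with h2 | h2
    · have heq : q = q' := gvert_inj hw hh (by omega) (by omega) (h1.symm.trans h2)
      subst heq
      exact hef rfl
    · have heq : q = q' + 1 := gvert_inj hw hh (by omega) hq1' (h1.symm.trans h2)
      omega
    · have heq : q + 1 = q' := gvert_inj hw hh hq1 (by omega) (h1.symm.trans h2)
      omega
    · have heq : q + 1 = q' + 1 := gvert_inj hw hh hq1 hq1' (h1.symm.trans h2)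
      have heq' : q = q' := by omega
      subst heq'
      exact hef rfl
  · intro z hz
    by_contra hne
    exact hz (hcov z hne)

lemma grid_hE (hw2 : w % 2 = 1) (hh2 : h % 2 = 1) :
    ∀ a b : Fin w × Fin h, ((pathGraph w).boxProd (pathGraph h)).Adj a b →
    ∃ u : Fin w × Fin h, (u = a ∨ u = b) ∧
      ∃ K : Set (Sym2 (Fin w × Fin h)),
        IsOddMatching ((pathGraph w).boxProd (pathGraph h)) K ∧ ¬ Covers K u := by
  have hwh : (w * h) % 2 = 1 := by
    rw [Nat.mul_mod, hw2, hh2]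
  have hw0 : 0 < w := by omega
  have hh0 : 0 < h := by omega
  intro a b hadj
  have hpar := gpos_parity hw2 hadj
  by_cases hpa : gpos w a % 2 = 0
  · obtain ⟨hK, hKu⟩ := Kmatch_odd hw0 hh0 hwh hpa (gpos_lt a)
    exact ⟨a, Or.inl rfl, Kmatch w h hw0 hh0 (gpos w a), hK,
      by rwa [gvert_gpos hw0 hh0 a] at hKu⟩
  · have hpb : gpos w b % 2 = 0 := by omega
    obtain ⟨hK, hKu⟩ := Kmatch_odd hw0 hh0 hwh hpb (gpos_lt b)
    exact ⟨b, Or.inr rfl, Kmatch w h hw0 hh0 (gpos w b), hK,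
      by rwa [gvert_gpos hw0 hh0 b] at hKu⟩

end Grid


/-- For odd `w, h ≥ 1`, the `w × h` rectangular grid graph `P_w □ P_h` is reconfigurable. -/
theorem stmt6 (w h : ℕ) (hw : 1 ≤ w) (hh : 1 ≤ h) (hwodd : Odd w) (hhodd : Odd h) :
    Reconfigurable ((SimpleGraph.pathGraph w).boxProd (SimpleGraph.pathGraph h)) := by
  exact generic_reconfigurable (grid_hE (Nat.odd_iff.mp hwodd) (Nat.odd_iff.mp hhodd))
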